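/- Valid cut lemma: let Ω ⊆ ℝ^n_+ be a set with F ⊆ Ω, let u ∈ int(ℝ^n_+) and u_Ω = max{u^T x : x ∈ Ω} > 0. Then for every positive semidefinite matrix S and every x ∈ F ⊆ [0,1]^n ∩ Ω, the inequality x^T S x − u_Ω · Diag(S)^T diag(u)^{-1} x ≤ 0 holds, where Diag(S) is the vector of diagonal entries of S. -/

import Mathlib

open Matrix BigOperators

private lemma psd_entry_sq_le {n : ℕ} {S : Matrix (Fin n) (Fin n) ℝ}
    (hS : S.PosSemidef) (i j : Fin n) : S i j ^ 2 ≤ S i i * S j j := by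
  have hsym : S j i = S i j := by
    have := hS.isHermitian
    have h := congrFun (congrFun this.eq i) j
    simpa [Matrix.conjTranspose_apply] using h
  have key : ∀ t : ℝ, 0 ≤ S i i * (t * t) + (2 * S i j) * t + S j j := by
    intro t
    have h := hS.dotProduct_mulVec_nonneg (show Fin n → ℝ from fun k => t * (Pi.single i 1 : Fin n → ℝ) k + (Pi.single j 1 : Fin n → ℝ) k)
    simp only [dotProduct, Matrix.mulVec, Pi.star_apply, star_trivial, one_mul,
      Pi.single_apply, smul_eq_mul, mul_ite, mul_one, mul_zero, ite_mul, zero_mul,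
      mul_add, add_mul, Finset.sum_add_distrib, Finset.sum_ite_eq, Finset.sum_ite_eq',
      Finset.mem_univ, if_true, RCLike.re_to_real] at h
    rw [hsym] at h
    linarith [h]
  have hd := discrim_le_zero key
  simp only [discrim] at hd
  nlinarith [hd]

private lemma psd_entry_le {n : ℕ} {S : Matrix (Fin n) (Fin n) ℝ}
    (hS : S.PosSemidef) (i j : Fin n) :
    S i j ≤ Real.sqrt (S i i) * Real.sqrt (S j j) := by
  have hii : 0 ≤ S i i := by
    have h := hS.dotProduct_mulVec_nonneg (Pi.single i 1 : Fin n → ℝ)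
    simpa [dotProduct, Matrix.mulVec, Pi.single_apply] using h
  have h1 : S i j ≤ |S i j| := le_abs_self _
  have h2 : |S i j| ≤ Real.sqrt (S i i * S j j) := by
    rw [← Real.sqrt_sq_eq_abs]
    exact Real.sqrt_le_sqrt (psd_entry_sq_le hS i j)
  calc S i j ≤ Real.sqrt (S i i * S j j) := h1.trans h2
    _ = Real.sqrt (S i i) * Real.sqrt (S j j) := Real.sqrt_mul hii _

theorem stmt_16 (n : ℕ) (Ω F : Set (Fin n → ℝ))
    (hΩ : ∀ x ∈ Ω, ∀ i, 0 ≤ x i)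
    (hFΩ : F ⊆ Ω)
    (hFbox : ∀ x ∈ F, ∀ i, 0 ≤ x i ∧ x i ≤ 1)
    (u : Fin n → ℝ) (hu : ∀ i, 0 < u i)
    (uΩ : ℝ) (huΩpos : 0 < uΩ)
    (huΩ : IsGreatest {v : ℝ | ∃ x ∈ Ω, v = u ⬝ᵥ x} uΩ)
    (S : Matrix (Fin n) (Fin n) ℝ) (hS : S.PosSemidef) :
    ∀ x ∈ F, x ⬝ᵥ S.mulVec x - uΩ * ∑ i, S i i * (x i / u i) ≤ 0 := by
  intro x hxF
  have hxΩ : x ∈ Ω := hFΩ hxF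
  have hx0 : ∀ i, 0 ≤ x i := fun i => (hFbox x hxF i).1
  have hdiag : ∀ i, 0 ≤ S i i := fun i => by
    have h := hS.dotProduct_mulVec_nonneg (Pi.single i 1 : Fin n → ℝ)
    simpa [dotProduct, Matrix.mulVec, Pi.single_apply] using h
  -- Step 1: x^T S x ≤ (∑ √S_ii x_i)^2
  have step1 : x ⬝ᵥ S.mulVec x ≤ (∑ i, Real.sqrt (S i i) * x i) ^ 2 := by
    have : x ⬝ᵥ S.mulVec x = ∑ i, ∑ j, x i * (S i j * x j) := by
      simp [dotProduct, Matrix.mulVec, Finset.mul_sum]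
    rw [this, sq, Finset.sum_mul]
    apply Finset.sum_le_sum
    intro i _
    rw [Finset.mul_sum]
    apply Finset.sum_le_sum
    intro j _
    have := psd_entry_le hS i j
    have hxi := hx0 i
    have hxj := hx0 j
    nlinarith [mul_nonneg hxi hxj]
  -- Step 2: Cauchy–Schwarz
  have step2 : (∑ i, Real.sqrt (S i i) * x i) ^ 2 ≤
      (∑ i, u i * x i) * ∑ i, S i i * (x i / u i) := by
    apply Finset.sum_sq_le_sum_mul_sum_of_sq_eq_mul
    · intro i _; exact mul_nonneg (hu i).le (hx0 i)
    · intro i _; exact mul_nonneg (hdiag i) (div_nonneg (hx0 i) (hu i).le)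
    · intro i _
      have hui := (hu i).ne'
      rw [mul_pow, Real.sq_sqrt (hdiag i)]
      field_simp
  -- Step 3: u·x ≤ uΩ
  have hux : ∑ i, u i * x i ≤ uΩ := huΩ.2 ⟨x, hxΩ, by simp [dotProduct]⟩
  have hg0 : 0 ≤ ∑ i, S i i * (x i / u i) :=
    Finset.sum_nonneg fun i _ => mul_nonneg (hdiag i) (div_nonneg (hx0 i) (hu i).le)
  have : x ⬝ᵥ S.mulVec x ≤ uΩ * ∑ i, S i i * (x i / u i) := by
    calc x ⬝ᵥ S.mulVec x ≤ (∑ i, u i * x i) * ∑ i, S i i * (x i / u i) :=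
          step1.trans step2
      _ ≤ uΩ * ∑ i, S i i * (x i / u i) := mul_le_mul_of_nonneg_right hux hg0
  linarith
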